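/- arXiv:1104.2882 — 2 statements merged into one kernel-verified Lean document; each statement's English description precedes it below -/
import Mathlib

section
/- Let x, y, z be three distinct vertices of an undirected graph G with positive edge weights. Let P_1 be a simple shortest path from y to x whose second vertex (neighbor of y on P_1) is y', and let P_2 be a simple shortest path from x to z whose second-to-last vertex is z'. Suppose y' ≠ z, z' ≠ y, and (z, y) ∈ E. Then the edge set P_1 ∪ P_2 ∪ {(z, y)} contains a simple cycle of weight at most w(P_1) + w(P_2) + w(z, y). -/
def IsWalk {V : Type*} (E : V → V → Prop) : List V → Prop
  | [] => True
  | [_] => True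
  | a :: b :: l => E a b ∧ IsWalk E (b :: l)

def IsWalkFrom {V : Type*} (E : V → V → Prop) (p : List V) (u x : V) : Prop :=
  IsWalk E p ∧ p.head? = some u ∧ p.getLast? = some x

def wWeight {V α : Type*} [AddCommMonoid α] (w : V → V → α) : List V → α
  | a :: b :: l => w a b + wWeight w (b :: l)
  | _ => 0

def arcW {V α : Type*} [AddCommMonoid α] (w : V → V → α) (c : ℕ → V) (a k : ℕ) : α :=
  ∑ j ∈ Finset.range k, w (c (a + j)) (c (a + j + 1))

/-- `{a, b}` is an (undirected) edge of the path given by the vertex list `p`. -/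
def edgeIn {V : Type*} (p : List V) (a b : V) : Prop :=
  (a, b) ∈ p.zip p.tail ∨ (b, a) ∈ p.zip p.tail

section helpers
variable {V : Type*} {E : V → V → Prop} {w : V → V → ℝ}

lemma isWalk_iff_chain' : ∀ p : List V, IsWalk E p ↔ List.Chain' E p
  | [] => by simp [IsWalk, List.Chain']
  | [a] => by simp [IsWalk, List.Chain']
  | a :: b :: l => by
      simp only [List.Chain', List.isChain_cons_cons]
      simp [IsWalk, isWalk_iff_chain' (b :: l), List.Chain']

lemma wWeight_split (y : V) : ∀ (xs ys : List V),
    wWeight w (xs ++ y :: ys) = wWeight w (xs ++ [y]) + wWeight w (y :: ys)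
  | [], ys => by simp [wWeight]
  | [a], ys => by simp [wWeight]
  | a :: b :: xs, ys => by
      have := wWeight_split y (b :: xs) ys
      simp only [List.cons_append] at *
      simp [wWeight, this]; ring

lemma zip_tail_split (y : V) : ∀ (xs ys : List V),
    (xs ++ y :: ys).zip (xs ++ y :: ys).tail
      = ((xs ++ [y]).zip (xs ++ [y]).tail) ++ ((y :: ys).zip ys)
  | [], ys => by simp
  | [a], ys => by simp
  | a :: b :: xs, ys => by
      have := zip_tail_split y (b :: xs) ys
      simp only [List.cons_append, List.tail_cons, List.zip_cons_cons] at *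
      simp [this]

lemma wWeight_nonneg (hw : ∀ a b, E a b → 0 ≤ w a b) :
    ∀ p : List V, IsWalk E p → 0 ≤ wWeight w p
  | [], _ => le_of_eq rfl
  | [a], _ => le_of_eq rfl
  | a :: b :: l, h => by
      have := wWeight_nonneg hw (b :: l) h.2
      have h1 := hw a b h.1
      show 0 ≤ w a b + wWeight w (b :: l)
      linarith

lemma mem_zip_tail_decomp {a b : V} : ∀ {p : List V},
    (a, b) ∈ p.zip p.tail → ∃ l1 l2, p = l1 ++ a :: b :: l2
  | [], h => by simp at h
  | [c], h => by simp at h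
  | c :: d :: l, h => by
      simp only [List.tail_cons, List.zip_cons_cons, List.mem_cons] at h
      rcases h with h | h
      · exact ⟨[], l, by
          obtain ⟨h1, h2⟩ := Prod.mk.injEq .. ▸ h
          simp [h1, h2]⟩
      · obtain ⟨l1, l2, hl⟩ := mem_zip_tail_decomp (p := d :: l) h
        exact ⟨c :: l1, l2, by simp [hl]⟩

lemma getD_mem_zip_tail (d : V) : ∀ (p : List V) (i : ℕ), i + 1 < p.length →
    (p.getD i d, p.getD (i+1) d) ∈ p.zip p.tail
  | [], i, h => by simp at h
  | [a], i, h => by simp at h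
  | a :: b :: l, 0, h => by simp
  | a :: b :: l, (i+1), h => by
      have := getD_mem_zip_tail d (b :: l) i (by simpa using h)
      simp only [List.tail_cons, List.zip_cons_cons, List.mem_cons]
      right; simpa using this

lemma wWeight_eq_sum (d : V) : ∀ p : List V,
    wWeight w p = ∑ j ∈ Finset.range (p.length - 1), w (p.getD j d) (p.getD (j+1) d)
  | [] => by simp [wWeight]
  | [a] => by simp [wWeight]
  | a :: b :: l => by
      have := wWeight_eq_sum d (b :: l)
      show w a b + wWeight w (b :: l) = _
      rw [this]
      have hlen : (a :: b :: l).length - 1 = (b :: l).length - 1 + 1 := by simp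
      rw [hlen, Finset.sum_range_succ']
      simp only [Nat.one_add, List.length_cons, Nat.add_sub_cancel, List.getD,
        List.getElem?_cons_succ, List.getElem?_cons_zero, zero_add, Option.getD_some]
      rw [add_comm]

end helpers

section helpers2
variable {V : Type*} {E : V → V → Prop} {w : V → V → ℝ}

lemma isWalk_split (y : V) (xs ys : List V) :
    IsWalk E (xs ++ y :: ys) ↔ IsWalk E (xs ++ [y]) ∧ IsWalk E (y :: ys) := by
  simp only [isWalk_iff_chain', List.Chain', List.isChain_append]
  simp only [List.getLast?_concat, List.head?_cons, Option.mem_some_iff,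
    List.isChain_singleton]
  constructor
  · rintro ⟨h1, h2, h3⟩
    refine ⟨⟨h1, trivial, ?_⟩, h2⟩
    · intro a ha b hb; subst hb; exact h3 a ha y rfl
  · rintro ⟨⟨h1, -, h3⟩, h2⟩
    refine ⟨h1, h2, ?_⟩
    intro a ha b hb; subst hb
    exact h3 a ha y rfl
end helpers2

section helpers3
variable {V : Type*} {E : V → V → Prop} {w : V → V → ℝ}

lemma not_nodup_decomp : ∀ {p : List V}, ¬ p.Nodup →
    ∃ (l1 l2 l3 : List V) (a : V), p = l1 ++ a :: l2 ++ a :: l3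
  | [], h => absurd List.nodup_nil h
  | b :: t, h => by
      by_cases hb : b ∈ t
      · obtain ⟨s, u, rfl⟩ := List.append_of_mem hb
        exact ⟨[], s, u, b, by simp⟩
      · have ht : ¬ t.Nodup := fun hn => h (List.nodup_cons.mpr ⟨hb, hn⟩)
        obtain ⟨l1, l2, l3, a, rfl⟩ := not_nodup_decomp ht
        exact ⟨b :: l1, l2, l3, a, by simp⟩

lemma pathify (hw : ∀ a b, E a b → 0 ≤ w a b) :
    ∀ p : List V, IsWalk E p → ∃ q : List V, q.Nodup ∧ IsWalk E q ∧
      q.head? = p.head? ∧ q.getLast? = p.getLast? ∧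
      wWeight w q ≤ wWeight w p ∧
      ∀ a b, (a, b) ∈ q.zip q.tail → (a, b) ∈ p.zip p.tail := by
  suffices H : ∀ (n : ℕ) (p : List V), p.length ≤ n → IsWalk E p → ∃ q : List V, q.Nodup ∧ IsWalk E q ∧
      q.head? = p.head? ∧ q.getLast? = p.getLast? ∧
      wWeight w q ≤ wWeight w p ∧
      ∀ a b, (a, b) ∈ q.zip q.tail → (a, b) ∈ p.zip p.tail by
    intro p; exact H p.length p le_rfl
  intro n
  induction n with
  | zero =>
      intro p hlen hwalk
      have : p = [] := List.length_eq_zero_iff.mp (Nat.le_zero.mp hlen)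
      subst this
      exact ⟨[], List.nodup_nil, trivial, rfl, rfl, le_refl _, fun a b h => h⟩
  | succ n IH =>
  intro p hlen hwalk
  by_cases hnd : p.Nodup
  · exact ⟨p, hnd, hwalk, rfl, rfl, le_refl _, fun a b h => h⟩
  · obtain ⟨l1, l2, l3, a, rfl⟩ := not_nodup_decomp hnd
    -- p = l1 ++ a :: (l2 ++ a :: l3)
    have hw1 : IsWalk E (l1 ++ [a]) ∧ IsWalk E (a :: (l2 ++ a :: l3)) := by
      rw [← isWalk_split]; simpa using hwalk
    have hw2 : IsWalk E ((a :: l2) ++ [a]) ∧ IsWalk E (a :: l3) := by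
      rw [← isWalk_split]; simpa using hw1.2
    set q0 : List V := l1 ++ a :: l3 with hq0
    have hq0walk : IsWalk E q0 := (isWalk_split a l1 l3).mpr ⟨hw1.1, hw2.2⟩
    have hq0len : q0.length < (l1 ++ a :: l2 ++ a :: l3).length := by
      simp [hq0]
    have hq0head : q0.head? = (l1 ++ a :: l2 ++ a :: l3).head? := by
      cases l1 <;> simp [hq0]
    have hq0last : q0.getLast? = (l1 ++ a :: l2 ++ a :: l3).getLast? := by
      rw [hq0, List.getLast?_append_cons]
      have : l1 ++ a :: l2 ++ a :: l3 = (l1 ++ a :: l2) ++ a :: l3 := by simp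
      rw [this, List.getLast?_append_cons]
    have hq0weight : wWeight w q0 ≤ wWeight w (l1 ++ a :: l2 ++ a :: l3) := by
      have e1 : wWeight w (l1 ++ a :: (l2 ++ a :: l3))
          = wWeight w (l1 ++ [a]) + wWeight w (a :: (l2 ++ a :: l3)) := wWeight_split a _ _
      have e2 : wWeight w ((a :: l2) ++ a :: l3)
          = wWeight w ((a :: l2) ++ [a]) + wWeight w (a :: l3) := wWeight_split a _ _
      have e3 : wWeight w q0 = wWeight w (l1 ++ [a]) + wWeight w (a :: l3) :=
        wWeight_split a _ _
      have hnn : 0 ≤ wWeight w ((a :: l2) ++ [a]) := wWeight_nonneg hw (_) hw2.1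
      simp only [List.cons_append] at e2 hnn
      simp only [List.append_assoc, List.cons_append] at e1 ⊢
      rw [e1, e2, e3]; linarith
    have hq0sub : ∀ x y : V, (x, y) ∈ q0.zip q0.tail →
        (x, y) ∈ (l1 ++ a :: l2 ++ a :: l3).zip (l1 ++ a :: l2 ++ a :: l3).tail := by
      intro x y hxy
      rw [hq0, zip_tail_split a l1 l3] at hxy
      have hsplit1 := zip_tail_split a l1 (l2 ++ a :: l3)
      have hsplit2 := zip_tail_split a (a :: l2) l3
      have hre : l1 ++ a :: l2 ++ a :: l3 = l1 ++ a :: (l2 ++ a :: l3) := by simp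
      rw [hre, hsplit1]
      rcases List.mem_append.mp hxy with h | h
      · exact List.mem_append.mpr (Or.inl h)
      · refine List.mem_append.mpr (Or.inr ?_)
        have : (a :: (l2 ++ a :: l3)).zip (l2 ++ a :: l3)
            = ((a :: l2) ++ a :: l3).zip (((a :: l2) ++ a :: l3)).tail := by simp
        rw [this, hsplit2]
        refine List.mem_append.mpr (Or.inr ?_)
        simpa using h
    obtain ⟨q, hnd, hwq, hh, hl, hwt, hsub⟩ := IH q0 (by omega) hq0walk
    exact ⟨q, hnd, hwq, hh.trans hq0head, hl.trans hq0last, hwt.trans hq0weight,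
      fun x y hxy => hq0sub x y (hsub x y hxy)⟩
end helpers3

def arcW' {V α : Type*} [AddCommMonoid α] (w : V → V → α) (c : ℕ → V) (a k : ℕ) : α :=
  ∑ j ∈ Finset.range k, w (c (a + j)) (c (a + j + 1))

section final
variable {V : Type*} {E : V → V → Prop}

lemma cycle_build (w : V → V → ℝ) {Q : List V} {y z : V}
    (hnd : Q.Nodup) (hwalk : IsWalk E Q) (hh : Q.head? = some y)
    (hl : Q.getLast? = some z) (hlen : 3 ≤ Q.length) (hzy : E z y) :
    ∃ (m : ℕ) (c : ℕ → V), 3 ≤ m ∧ (∀ j, c (j + m) = c j) ∧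
      (∀ j, E (c j) (c (j + 1))) ∧ (∀ i j, i < m → j < m → c i = c j → i = j) ∧
      (∀ j, (c j, c (j + 1)) ∈ Q.zip Q.tail ∨ (c j = z ∧ c (j + 1) = y)) ∧
      arcW' w c 0 m = wWeight w Q + w z y := by
  set m := Q.length with hm
  have hm0 : 0 < m := by omega
  set c : ℕ → V := fun j => Q.getD (j % m) y with hc
  have hhead : Q.getD 0 y = y := by
    rw [List.getD_eq_getElem?_getD, ← List.head?_eq_getElem?, hh]; rfl
  have hlast : Q.getD (m - 1) y = z := by
    rw [List.getD_eq_getElem?_getD, show m = Q.length from hm, ← List.getLast?_eq_getElem?, hl]; rfl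
  have hchain : List.Chain' E Q := (isWalk_iff_chain' Q).mp hwalk
  -- key structural fact about consecutive values of c
  have key : ∀ j : ℕ, (j % m + 1 < m ∧ c j = Q.getD (j % m) y ∧
      c (j + 1) = Q.getD (j % m + 1) y) ∨ (c j = z ∧ c (j + 1) = y) := by
    intro j
    have hjm : j % m < m := Nat.mod_lt _ hm0
    have hsucc : (j + 1) % m = (j % m + 1) % m := by
      conv_lhs => rw [Nat.add_mod]
      congr 1
      rw [Nat.mod_eq_of_lt (show 1 < m by omega)]
    rcases lt_or_eq_of_le (Nat.succ_le_of_lt hjm) with h | h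
    · left
      refine ⟨h, rfl, ?_⟩
      rw [hc]; simp only
      rw [hsucc, Nat.mod_eq_of_lt h]
    · right
      constructor
      · rw [hc]; simp only
        rw [show j % m = m - 1 by omega]; exact hlast
      · rw [hc]; simp only
        rw [hsucc, show j % m + 1 = m from h, Nat.mod_self]; exact hhead
  have hEdge : ∀ i, i + 1 < m → E (Q.getD i y) (Q.getD (i + 1) y) := by
    intro i hi
    have h1 : i < Q.length := by omega
    have h2 : i + 1 < Q.length := by omega
    rw [List.getD_eq_getElem _ _ h1, List.getD_eq_getElem _ _ h2]
    have := List.isChain_iff_getElem.mp hchain i (by omega)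
    simpa [List.get_eq_getElem] using this
  refine ⟨m, c, hlen, ?_, ?_, ?_, ?_, ?_⟩
  · intro j; rw [hc]; simp only; rw [Nat.add_mod_right]
  · intro j
    rcases key j with ⟨h1, h2, h3⟩ | ⟨h2, h3⟩
    · rw [h2, h3]; exact hEdge _ h1
    · rw [h2, h3]; exact hzy
  · intro i j hi hj hij
    rw [hc] at hij; simp only at hij
    rw [Nat.mod_eq_of_lt hi, Nat.mod_eq_of_lt hj,
      List.getD_eq_getElem _ _ (by omega : i < Q.length),
      List.getD_eq_getElem _ _ (by omega : j < Q.length)] at hij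
    have := (hnd.get_inj_iff (i := ⟨i, by omega⟩) (j := ⟨j, by omega⟩)).mp
      (by simpa [List.get_eq_getElem] using hij)
    exact congrArg Fin.val this
  · intro j
    rcases key j with ⟨h1, h2, h3⟩ | ⟨h2, h3⟩
    · left; rw [h2, h3]; exact getD_mem_zip_tail y Q (j % m) (by omega)
    · right; exact ⟨h2, h3⟩
  · rw [arcW']
    simp only [zero_add]
    rw [show m = (m - 1) + 1 by omega, Finset.sum_range_succ,
      ← (show m = (m - 1) + 1 by omega)]
    have hsum : ∑ j ∈ Finset.range (m - 1), w (c j) (c (j + 1))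
        = ∑ j ∈ Finset.range (m - 1), w (Q.getD j y) (Q.getD (j + 1) y) := by
      refine Finset.sum_congr rfl fun j hj => ?_
      have hj' : j < m - 1 := Finset.mem_range.mp hj
      have e1 : c j = Q.getD j y := by
        rw [hc]; simp only; rw [Nat.mod_eq_of_lt (by omega)]
      have e2 : c (j + 1) = Q.getD (j + 1) y := by
        rw [hc]; simp only; rw [Nat.mod_eq_of_lt (by omega)]
      rw [e1, e2]
    have hclose1 : c (m - 1) = z := by
      rw [hc]; simp only; rw [Nat.mod_eq_of_lt (by omega)]; exact hlast
    have hclose2 : c m = y := by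
      rw [hc]; simp only; rw [Nat.mod_self]; exact hhead
    rw [hsum, hclose1, hclose2, wWeight_eq_sum y Q]
end final

/-- in an undirected graph with positive edge weights, let `x, y, z` be
distinct, `P₁` a simple shortest path from `y` to `x` with second vertex `y'`,
`P₂` a simple shortest path from `x` to `z` with second-to-last vertex `z'`,
`y' ≠ z`, `z' ≠ y`, and `(z, y) ∈ E`. Then the edge set `P₁ ∪ P₂ ∪ {(z, y)}`
contains a simple cycle (≥ 3 vertices, encoded as an injective periodic sequence whose
consecutive edges all come from `P₁`, `P₂` or `{z,y}`) of weight at most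
`w(P₁) + w(P₂) + w(z, y)`. -/
theorem stmt4 {V : Type*} (E : V → V → Prop) (w : V → V → ℝ)
    (hEsym : ∀ a b, E a b → E b a) (hwsym : ∀ a b, w a b = w b a)
    (hwpos : ∀ a b, E a b → 0 < w a b)
    (x y z y' z' : V) (hxy : x ≠ y) (hxz : x ≠ z) (hyz : y ≠ z)
    (P1 P2 : List V)
    (hP1 : IsWalkFrom E P1 y x) (hP1nd : P1.Nodup)
    (hP1min : ∀ q, IsWalkFrom E q y x → q.Nodup → wWeight w P1 ≤ wWeight w q)
    (hP2 : IsWalkFrom E P2 x z) (hP2nd : P2.Nodup)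
    (hP2min : ∀ q, IsWalkFrom E q x z → q.Nodup → wWeight w P2 ≤ wWeight w q)
    (hy' : P1[1]? = some y') (hz' : P2.reverse[1]? = some z')
    (hy'z : y' ≠ z) (hz'y : z' ≠ y) (hzy : E z y) :
    ∃ (m : ℕ) (c : ℕ → V), 3 ≤ m ∧ (∀ j, c (j + m) = c j) ∧
      (∀ j, E (c j) (c (j + 1))) ∧ (∀ i j, i < m → j < m → c i = c j → i = j) ∧
      (∀ j, edgeIn P1 (c j) (c (j + 1)) ∨ edgeIn P2 (c j) (c (j + 1)) ∨
        (c j = z ∧ c (j + 1) = y) ∨ (c j = y ∧ c (j + 1) = z)) ∧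
      arcW w c 0 m ≤ wWeight w P1 + wWeight w P2 + w z y := by
  obtain ⟨hP1w, hP1h, hP1l⟩ := hP1
  obtain ⟨hP2w, hP2h, hP2l⟩ := hP2
  have hP1ne : P1 ≠ [] := by intro h; rw [h] at hP1h; simp at hP1h
  -- P2 = x :: t2
  obtain ⟨t2, hP2eq⟩ : ∃ t2, P2 = x :: t2 := by
    cases P2 with
    | nil => simp at hP2h
    | cons a t =>
        simp only [List.head?_cons, Option.some_inj] at hP2h
        exact ⟨t, by rw [hP2h]⟩
  -- P1 starts with y and has ≥ 2 elements
  obtain ⟨b1, t1, hP1eq⟩ : ∃ b t, P1 = y :: b :: t := by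
    cases P1 with
    | nil => simp at hP1h
    | cons a t =>
        simp only [List.head?_cons, Option.some_inj] at hP1h
        subst hP1h
        cases t with
        | nil =>
            simp only [List.getLast?_singleton, Option.some_inj] at hP1l
            exact absurd hP1l.symm hxy
        | cons b t' => exact ⟨b, t', rfl⟩
  have hP1getLast : P1.getLast hP1ne = x := by
    rw [List.getLast?_eq_getLast hP1ne, Option.some_inj] at hP1l
    exact hP1l
  have hP1split : P1.dropLast ++ [x] = P1 := by
    rw [← hP1getLast]; exact List.dropLast_append_getLast hP1ne
  set M : List V := P1.dropLast ++ P2 with hM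
  have hMwalk : IsWalk E M := by
    rw [hM, hP2eq]
    exact (isWalk_split x _ _).mpr ⟨by rw [hP1split]; exact hP1w,
      by rw [← hP2eq]; exact hP2w⟩
  have hMhead : M.head? = some y := by
    rw [hM, hP1eq]; simp
  have hMlast : M.getLast? = some z := by
    rw [hM, hP2eq, List.getLast?_append_cons, ← hP2eq]; exact hP2l
  have hMweight : wWeight w M = wWeight w P1 + wWeight w P2 := by
    rw [hM, hP2eq, wWeight_split x P1.dropLast t2, hP1split, ← hP2eq]
  have hMsub : ∀ a b : V, (a, b) ∈ M.zip M.tail →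
      (a, b) ∈ P1.zip P1.tail ∨ (a, b) ∈ P2.zip P2.tail := by
    intro a b h
    rw [hM, hP2eq, zip_tail_split x P1.dropLast t2, hP1split] at h
    rcases List.mem_append.mp h with h | h
    · exact Or.inl h
    · right; rw [hP2eq]; simpa using h
  have hwnn : ∀ a b : V, E a b → 0 ≤ w a b := fun a b h => (hwpos a b h).le
  obtain ⟨Q, hQnd, hQw, hQh, hQl, hQwt, hQsub⟩ := pathify hwnn M hMwalk
  rw [hMhead] at hQh
  rw [hMlast] at hQl
  have hQne : Q ≠ [] := by intro h; rw [h] at hQh; simp at hQh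
  have hQlen1 : Q.length ≠ 1 := by
    intro h
    obtain ⟨a, rfl⟩ := List.length_eq_one_iff.mp h
    simp only [List.head?_cons, Option.some_inj] at hQh
    simp only [List.getLast?_singleton, Option.some_inj] at hQl
    exact hyz (hQh ▸ hQl ▸ rfl)
  have hQlen3 : 3 ≤ Q.length := by
    rcases Nat.lt_or_ge Q.length 3 with h | h
    · exfalso
      have h2 : Q.length = 2 := by
        have : Q.length ≠ 0 := fun hh => hQne (List.length_eq_zero_iff.mp hh)
        omega
      obtain ⟨a, b, rfl⟩ := List.length_eq_two.mp h2
      simp only [List.head?_cons, Option.some_inj] at hQh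
      have hbz : b = z := by
        simp only [List.getLast?_cons_cons, List.getLast?_singleton,
          Option.some_inj] at hQl
        exact hQl
      have hyzQ : (y, z) ∈ ([a, b] : List V).zip [a, b].tail := by
        simp [hQh, hbz]
      rcases hMsub y z (hQsub y z hyzQ) with h | h
      · -- edge (y, z) appears in P1
        obtain ⟨l1, l2, hd⟩ := mem_zip_tail_decomp h
        have hl1 : l1 = [] := by
          cases l1 with
          | nil => rfl
          | cons c l1' =>
              exfalso
              rw [hd] at hP1h hP1nd
              simp only [List.cons_append, List.head?_cons, Option.some_inj] at hP1h
              subst hP1h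
              rw [List.cons_append, List.nodup_cons] at hP1nd
              exact hP1nd.1 (by simp)
        subst hl1
        rw [hd] at hy'
        simp only [List.nil_append, List.getElem?_cons_succ,
          List.getElem?_cons_zero, Option.some_inj] at hy'
        exact hy'z hy'.symm
      · -- edge (y, z) appears in P2
        obtain ⟨l1, l2, hd⟩ := mem_zip_tail_decomp h
        have hl2 : l2 = [] := by
          cases l2 with
          | nil => rfl
          | cons c l2' =>
              exfalso
              rw [hd] at hP2l hP2nd
              rw [List.getLast?_append_cons] at hP2l
              have hzmem : z ∈ c :: l2' := by
                simp only [List.getLast?_cons_cons] at hP2l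
                rw [List.getLast?_eq_getLast (by simp), Option.some_inj] at hP2l
                rw [← hP2l]; exact List.getLast_mem _
              have hnd2 : (y :: z :: c :: l2').Nodup := hP2nd.of_append_right
              have := (List.nodup_cons.mp (List.nodup_cons.mp hnd2).2).1
              exact this hzmem
        subst hl2
        rw [hd] at hz'
        simp only [List.reverse_append, List.reverse_cons] at hz'
        simp at hz'
        exact hz'y hz'.symm
    · exact h
  obtain ⟨m, c, h3, hper, hEe, hinj, hedge, harc⟩ :=
    cycle_build (E := E) w hQnd hQw hQh hQl hQlen3 hzy
  refine ⟨m, c, h3, hper, hEe, hinj, ?_, ?_⟩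
  · intro j
    rcases hedge j with h | h
    · rcases hMsub _ _ (hQsub _ _ h) with h' | h'
      · exact Or.inl (Or.inl h')
      · exact Or.inr (Or.inl (Or.inl h'))
    · exact Or.inr (Or.inr (Or.inl h))
  · have harc' : arcW w c 0 m = arcW' w c 0 m := rfl
    rw [harc', harc]
    rw [hMweight] at hQwt
    linarith
end

section
/- Let G be a directed graph with integer edge weights in {−M, ..., M} and no negative cycles, and let C be a minimum-weight simple cycle with w(C) ≥ 0. Define t* as the minimum over all triples (a, b, c) with (b, c) ∈ E, d[a,b] < ∞, d[c,a] < ∞, and d[a,b] + w(b,c) + d[c,a] = w(C), of max(d[a,b], d[c,a]). Then t* ≤ ⌊w(C)/2⌋ and w(C) ≤ 2t* + M. -/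
section Aux

variable {V : Type*} {E : V → V → Prop} {w : V → V → ℤ}

lemma arcW_succ' (c : ℕ → V) (a k : ℕ) :
    arcW w c a (k + 1) = w (c a) (c (a + 1)) + arcW w c (a + 1) k := by
  unfold arcW
  rw [Finset.sum_range_succ']
  simp only [Nat.add_zero]
  rw [add_comm]
  congr 1
  apply Finset.sum_congr rfl
  intro j _
  rw [show a + (j + 1) = a + 1 + j from by omega]

lemma arcW_add (c : ℕ → V) (a k l : ℕ) :
    arcW w c a (k + l) = arcW w c a k + arcW w c (a + k) l := by
  induction l with
  | zero => simp [arcW]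
  | succ l ih =>
    rw [show k + (l + 1) = (k + l) + 1 from rfl]
    unfold arcW at *
    rw [Finset.sum_range_succ, ih, Finset.sum_range_succ]
    rw [show a + (k + l) = a + k + l from by omega]
    ring

lemma arcW_shift (c c' : ℕ → V) (a a' k : ℕ) (h : ∀ j ≤ k, c (a + j) = c' (a' + j)) :
    arcW w c a k = arcW w c' a' k := by
  apply Finset.sum_congr rfl
  intro j hj
  rw [Finset.mem_range] at hj
  rw [h j (by omega), show a + j + 1 = a + (j + 1) from by omega,
    show a' + j + 1 = a' + (j + 1) from by omega, h (j + 1) (by omega)]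

def pathList (c : ℕ → V) : ℕ → ℕ → List V
  | a, 0 => [c a]
  | a, k + 1 => c a :: pathList c (a + 1) k

lemma pathList_cons (c : ℕ → V) (a k : ℕ) : ∃ t, pathList c a k = c a :: t := by
  cases k <;> exact ⟨_, rfl⟩

lemma pathList_head? (c : ℕ → V) (a k : ℕ) : (pathList c a k).head? = some (c a) := by
  obtain ⟨t, ht⟩ := pathList_cons c a k
  rw [ht]; rfl

lemma pathList_getLast? (c : ℕ → V) (a k : ℕ) :
    (pathList c a k).getLast? = some (c (a + k)) := by
  induction k generalizing a with
  | zero => simp [pathList]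
  | succ k ih =>
    obtain ⟨t, ht⟩ := pathList_cons c (a + 1) k
    show (c a :: pathList c (a + 1) k).getLast? = _
    rw [ht, List.getLast?_cons_cons, ← ht, ih, show a + 1 + k = a + (k + 1) from by omega]

lemma pathList_isWalk (c : ℕ → V) (hc : ∀ j, E (c j) (c (j + 1))) (a k : ℕ) :
    IsWalk E (pathList c a k) := by
  induction k generalizing a with
  | zero => trivial
  | succ k ih =>
    obtain ⟨t, ht⟩ := pathList_cons c (a + 1) k
    show IsWalk E (c a :: pathList c (a + 1) k)
    rw [ht]
    exact ⟨hc a, by rw [← ht]; exact ih (a + 1)⟩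

lemma pathList_isWalkFrom (c : ℕ → V) (hc : ∀ j, E (c j) (c (j + 1))) (a k : ℕ) :
    IsWalkFrom E (pathList c a k) (c a) (c (a + k)) :=
  ⟨pathList_isWalk c hc a k, pathList_head? c a k, pathList_getLast? c a k⟩

lemma pathList_wWeight (c : ℕ → V) (a k : ℕ) :
    wWeight w (pathList c a k) = arcW w c a k := by
  induction k generalizing a with
  | zero => simp [pathList, wWeight, arcW]
  | succ k ih =>
    obtain ⟨t, ht⟩ := pathList_cons c (a + 1) k
    show wWeight w (c a :: pathList c (a + 1) k) = _
    rw [ht]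
    show w (c a) (c (a + 1)) + wWeight w (c (a + 1) :: t) = _
    rw [← ht, ih, arcW_succ']

lemma walk_append_edge {u x y z : V} :
    ∀ p q : List V, IsWalkFrom E p u x → IsWalkFrom E q y z → E x y →
      IsWalkFrom E (p ++ q) u z ∧ wWeight w (p ++ q) = wWeight w p + w x y + wWeight w q := by
  intro p
  induction p generalizing u with
  | nil => intro q hp; exact absurd hp.2.1 (by simp)
  | cons a t ih =>
    intro q hp hq hxy
    obtain ⟨hw, hh, hl⟩ := hp
    have hau : a = u := by simpa using hh
    cases t with
    | nil =>
      have hax : a = x := by simpa using hl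
      obtain ⟨b, t', rfl⟩ : ∃ b t', q = b :: t' := by
        cases q with
        | nil => exact absurd hq.2.1 (by simp)
        | cons b t' => exact ⟨b, t', rfl⟩
      have hby : b = y := by simpa using hq.2.1
      refine ⟨⟨⟨by rw [hax, hby]; exact hxy, hq.1⟩, by rw [hau]; rfl, ?_⟩, ?_⟩
      · show (a :: b :: t').getLast? = some z
        rw [List.getLast?_cons_cons]
        exact hq.2.2
      · rw [← hax, ← hby]
        show w a b + wWeight w (b :: t') = wWeight w [a] + w a b + wWeight w (b :: t')
        simp [wWeight]
    | cons b t' =>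
      obtain ⟨hab, hwt⟩ := hw
      have hl' : (b :: t').getLast? = some x := by
        rw [← hl, List.getLast?_cons_cons]
      obtain ⟨hW, hE⟩ := ih (u := b) q ⟨hwt, rfl, hl'⟩ hq hxy
      constructor
      · refine ⟨⟨hab, hW.1⟩, by rw [hau]; rfl, ?_⟩
        show (a :: (b :: (t' ++ q))).getLast? = some z
        rw [List.getLast?_cons_cons]
        exact hW.2.2
      · show w a b + wWeight w ((b :: t') ++ q) = _
        rw [hE]
        show _ = w a b + wWeight w (b :: t') + w x y + wWeight w q
        ring

lemma walk_getD (d0 : V) :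
    ∀ p : List V, IsWalk E p →
      (∀ j, j + 1 < p.length → E (p.getD j d0) (p.getD (j + 1) d0)) ∧
      wWeight w p = arcW w (fun j => p.getD j d0) 0 (p.length - 1) := by
  intro p
  induction p with
  | nil => intro _; exact ⟨fun j hj => by simp at hj, by simp [wWeight, arcW]⟩
  | cons a t ih =>
    intro hw
    cases t with
    | nil =>
      refine ⟨fun j hj => by simp at hj, ?_⟩
      simp [wWeight, arcW]
    | cons b l =>
      obtain ⟨hab, hwt⟩ := hw
      obtain ⟨ihE, ihW⟩ := ih hwt
      constructor
      · intro j hj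
        cases j with
        | zero => simpa using hab
        | succ j =>
          rw [List.getD_cons_succ, List.getD_cons_succ]
          exact ihE j (by simpa using Nat.lt_of_succ_lt_succ hj)
      · show w a b + wWeight w (b :: l) = _
        rw [ihW]
        have hlen : (a :: b :: l).length - 1 = ((b :: l).length - 1) + 1 := by
          simp
        rw [hlen, arcW_succ']
        have hfst : w ((a :: b :: l).getD 0 d0) ((a :: b :: l).getD (0 + 1) d0) = w a b := by
          simp
        have hrest : arcW w (fun j => (b :: l).getD j d0) 0 ((b :: l).length - 1)
            = arcW w (fun j => (a :: b :: l).getD j d0) (0 + 1) ((b :: l).length - 1) := by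
          refine arcW_shift _ _ _ _ _ (fun j _ => ?_)
          show (b :: l).getD (0 + j) d0 = (a :: b :: l).getD (0 + 1 + j) d0
          rw [show (0:ℕ) + 1 + j = (0 + j) + 1 from by omega, List.getD_cons_succ]
        rw [← hfst, ← hrest]

/-- Weight of any nonempty closed walk (as an index function) is at least `W`,
given every simple cycle has weight at least `W ≥ 0`. -/
lemma closed_ge {W : ℤ} (hW : 0 ≤ W)
    (hm : ∀ (m : ℕ) (u : ℕ → V), 1 ≤ m → (∀ j, u (j + m) = u j) →
      (∀ j, E (u j) (u (j + 1))) → (∀ i j, i < m → j < m → u i = u j → i = j) →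
      W ≤ arcW w u 0 m) :
    ∀ n : ℕ, ∀ c : ℕ → V, 1 ≤ n → c n = c 0 → (∀ j, j < n → E (c j) (c (j + 1))) →
      W ≤ arcW w c 0 n := by
  intro n
  induction n using Nat.strong_induction_on with
  | _ n ih =>
  intro c hn hcl hedges
  by_cases hinj : ∀ i j, i < n → j < n → c i = c j → i = j
  · -- simple cycle
    have key : ∀ j, (j + 1) % n = (j % n + 1) % n := by
      intro j
      conv_lhs => rw [show j + 1 = n * (j / n) + (j % n + 1) from by
        have := Nat.div_add_mod j n; omega]
      rw [Nat.mul_add_mod]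
    have hr : ∀ j, j % n < n := fun j => Nat.mod_lt _ (by omega)
    have hmain := hm n (fun j => c (j % n)) hn
      (fun j => by simp [Nat.add_mod_right])
      (fun j => by
        rcases eq_or_lt_of_le (Nat.succ_le_of_lt (hr j)) with heq | hlt
        · show E (c (j % n)) (c ((j + 1) % n))
          rw [key j, show j % n + 1 = n from by omega, Nat.mod_self, ← hcl]
          have h5 := hedges (j % n) (hr j)
          rw [show j % n + 1 = n from by omega] at h5
          exact h5
        · show E (c (j % n)) (c ((j + 1) % n))
          rw [key j, Nat.mod_eq_of_lt hlt]
          exact hedges _ (hr j))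
      (fun i j hi hj hc => by
        simp only [Nat.mod_eq_of_lt hi, Nat.mod_eq_of_lt hj] at hc
        exact hinj i j hi hj hc)
    refine le_trans hmain (le_of_eq ?_)
    apply arcW_shift
    intro j hj
    simp only [Nat.zero_add]
    rcases eq_or_lt_of_le hj with h | h
    · rw [h, Nat.mod_self, hcl]
    · rw [Nat.mod_eq_of_lt h]
  · push_neg at hinj
    obtain ⟨i0, j0, hi0, hj0, hc0, hne0⟩ := hinj
    obtain ⟨i, j, hij, hjn, heq⟩ : ∃ i j, i < j ∧ j < n ∧ c i = c j := by
      rcases Nat.lt_or_ge i0 j0 with h | h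
      · exact ⟨i0, j0, h, hj0, hc0⟩
      · exact ⟨j0, i0, by omega, hi0, hc0.symm⟩
    set n1 := j - i with hn1
    set n2 := n - (j - i) with hn2
    -- inner cycle
    have hinner : W ≤ arcW w (fun k => c (i + k)) 0 n1 := by
      apply ih n1 (by omega) _ (by omega)
      · show c (i + n1) = c (i + 0)
        rw [show i + n1 = j from by omega, show i + 0 = i from rfl]
        exact heq.symm
      · intro k hk
        show E (c (i + k)) (c (i + (k + 1)))
        rw [show i + (k + 1) = (i + k) + 1 from by omega]
        exact hedges _ (by omega)
    -- outer cycle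
    set c2 : ℕ → V := fun k => if k ≤ i then c k else c (k + (j - i)) with hc2
    have houter : W ≤ arcW w c2 0 n2 := by
      apply ih n2 (by omega) _ (by omega)
      · show c2 n2 = c2 0
        rw [hc2]
        simp only
        rw [if_neg (by omega), if_pos (by omega), show n2 + (j - i) = n from by omega, hcl]
      · intro k hk
        by_cases h1 : k + 1 ≤ i
        · show E (c2 k) (c2 (k + 1))
          rw [hc2]; simp only
          rw [if_pos (by omega), if_pos h1]
          exact hedges _ (by omega)
        · by_cases h2 : k ≤ i
          · -- k = i
            have hk2 : k = i := by omega
            show E (c2 k) (c2 (k + 1))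
            rw [hc2]; simp only
            rw [if_pos h2, if_neg (by omega), hk2, heq,
              show i + 1 + (j - i) = j + 1 from by omega]
            exact hedges _ (by omega)
          · show E (c2 k) (c2 (k + 1))
            rw [hc2]; simp only
            rw [if_neg h2, if_neg (by omega), show k + 1 + (j - i) = (k + (j - i)) + 1 from by omega]
            exact hedges _ (by omega)
    -- weight split
    have hsplit : arcW w c 0 n = arcW w (fun k => c (i + k)) 0 n1 + arcW w c2 0 n2 := by
      have e1 : arcW w c 0 n = arcW w c 0 j + arcW w c j (n - j) := by
        have h := arcW_add (w := w) c 0 j (n - j)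
        rw [show j + (n - j) = n from by omega, Nat.zero_add] at h
        exact h
      have e2 : arcW w c 0 j = arcW w c 0 i + arcW w c i n1 := by
        have h := arcW_add (w := w) c 0 i n1
        rw [show i + n1 = j from by omega, Nat.zero_add] at h
        exact h
      have e3 : arcW w (fun k => c (i + k)) 0 n1 = arcW w c i n1 := by
        apply arcW_shift; intro k _; simp [Nat.add_comm]
      have e4 : arcW w c2 0 n2 = arcW w c2 0 i + arcW w c2 i (n - j) := by
        have h := arcW_add (w := w) c2 0 i (n - j)
        rw [show i + (n - j) = n2 from by omega, Nat.zero_add] at h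
        exact h
      have e5 : arcW w c2 0 i = arcW w c 0 i := by
        apply arcW_shift; intro k hk
        rw [hc2]; simp only [Nat.zero_add]
        rw [if_pos hk]
      have e6 : arcW w c2 i (n - j) = arcW w c j (n - j) := by
        apply arcW_shift; intro k hk
        rw [hc2]; simp only
        by_cases hk0 : k = 0
        · subst hk0; rw [if_pos (by omega)]; simpa using heq
        · rw [if_neg (by omega), show i + k + (j - i) = j + k from by omega]
      rw [e1, e2, e3, e4, e5, e6]
      ring
    rw [hsplit]
    linarith

/-- List version of the closed-walk lower bound. -/
lemma closed_ge_list {W : ℤ} (hW : 0 ≤ W)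
    (hm : ∀ (m : ℕ) (u : ℕ → V), 1 ≤ m → (∀ j, u (j + m) = u j) →
      (∀ j, E (u j) (u (j + 1))) → (∀ i j, i < m → j < m → u i = u j → i = j) →
      W ≤ arcW w u 0 m)
    (p : List V) (s : V) (hp : IsWalkFrom E p s s) (hlen : 2 ≤ p.length) :
    W ≤ wWeight w p := by
  obtain ⟨hw, hh, hl⟩ := hp
  obtain ⟨hE, hWt⟩ := walk_getD (E := E) (w := w) s p hw
  set c : ℕ → V := fun j => p.getD j s with hc
  set n : ℕ := p.length - 1 with hn
  have hc0 : c 0 = s := by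
    cases p with
    | nil => simp at hh
    | cons a t => simp at hh; simp [hc, hh]
  have hcn : c n = s := by
    have hne : p ≠ [] := by intro h; subst h; simp at hh
    have hgl : p.getLast hne = s := by
      have h2 := List.getLast?_eq_getLast hne
      rw [h2] at hl
      exact Option.some_injective _ hl
    have h3 : c n = p[p.length - 1] := by
      rw [hc]
      exact List.getD_eq_getElem p s (by omega)
    rw [h3, ← List.getLast_eq_getElem hne, hgl]
  rw [hWt]
  exact closed_ge hW hm n c (by omega) (by rw [hcn, hc0]) (fun j hj => hE j (by omega))

lemma arcW_succ (c : ℕ → V) (a k : ℕ) :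
    arcW w c a (k + 1) = arcW w c a k + w (c (a + k)) (c (a + k + 1)) :=
  Finset.sum_range_succ _ _

lemma one_le_length_of_head? {p : List V} {u : V} (h : p.head? = some u) : 1 ≤ p.length := by
  cases p with
  | nil => simp at h
  | cons a t => simp

end Aux

/-- let `G` be a directed graph with integer edge weights in
`{-M, …, M}` and no negative cycles, and `C` (the injective `ℓ`-periodic sequence `v`)
a minimum-weight simple cycle with `wC = arcW w v 0 ℓ ≥ 0`. Let `t*` be the minimum,
over all triples `(a, b, c)` with `(b, c) ∈ E`, `d[a,b] < ∞`, `d[c,a] < ∞` and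
`d[a,b] + w(b,c) + d[c,a] = wC`, of `max(d[a,b], d[c,a])`. Then `t* ≤ ⌊wC/2⌋` and
`wC ≤ 2 t* + M`. Here `d` is the shortest-path distance with values in `ℤ ∪ {∞}`. -/
theorem stmt17 {V : Type*} (E : V → V → Prop) (w : V → V → ℤ) (M : ℤ) (hM : 1 ≤ M)
    (hwb : ∀ p q, E p q → -M ≤ w p q ∧ w p q ≤ M)
    (d : V → V → WithTop ℤ)
    (hdle : ∀ u x p, IsWalkFrom E p u x → d u x ≤ (wWeight w p : ℤ))
    (hdach : ∀ u x, (∃ p, IsWalkFrom E p u x) →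
      ∃ p, IsWalkFrom E p u x ∧ d u x = (wWeight w p : ℤ))
    (ℓ : ℕ) (v : ℕ → V) (hℓ : 1 ≤ ℓ)
    (hper : ∀ j, v (j + ℓ) = v j)
    (hedge : ∀ j, E (v j) (v (j + 1)))
    (hinj : ∀ i j, i < ℓ → j < ℓ → v i = v j → i = j)
    (hwC : 0 ≤ arcW w v 0 ℓ)
    (hmin : ∀ (m : ℕ) (u : ℕ → V), 1 ≤ m → (∀ j, u (j + m) = u j) →
      (∀ j, E (u j) (u (j + 1))) → (∀ i j, i < m → j < m → u i = u j → i = j) →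
      arcW w v 0 ℓ ≤ arcW w u 0 m)
    (tstar : ℤ)
    (htstar : IsLeast {x : ℤ | ∃ (a b c : V) (p q : ℤ), E b c ∧
      d a b = (p : WithTop ℤ) ∧ d c a = (q : WithTop ℤ) ∧
      p + w b c + q = arcW w v 0 ℓ ∧ x = max p q} tstar) :
    tstar ≤ arcW w v 0 ℓ / 2 ∧ arcW w v 0 ℓ ≤ 2 * tstar + M := by
  classical
  set W := arcW w v 0 ℓ with hWdef
  have hper0 : v ℓ = v 0 := by simpa using hper 0
  have hh0 : 0 ≤ W / 2 := Int.ediv_nonneg hwC (by norm_num)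
  -- Part 2 first
  have part2 : W ≤ 2 * tstar + M := by
    obtain ⟨a, b, c, pv, qv, hbc, _, _, hsum, hts⟩ := htstar.1
    have hw2 := (hwb b c hbc).2
    have h1 := le_max_left pv qv
    have h2 := le_max_right pv qv
    rw [hts]
    linarith
  -- Part 1
  set S : Finset ℕ := (Finset.range ℓ).filter (fun i => arcW w v 0 i ≤ W / 2) with hS
  have h0S : 0 ∈ S := by
    rw [hS, Finset.mem_filter, Finset.mem_range]
    refine ⟨hℓ, ?_⟩
    simpa [arcW] using hh0
  set i0 := S.max' ⟨0, h0S⟩ with hi0def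
  have hi0mem := S.max'_mem ⟨0, h0S⟩
  have hi0mem2 := Finset.mem_filter.mp hi0mem
  have hi0lt : i0 < ℓ := Finset.mem_range.mp hi0mem2.1
  have hi0le : arcW w v 0 i0 ≤ W / 2 := hi0mem2.2
  have hmax' : ∀ b ∈ S, b ≤ i0 := fun b hb => S.le_max' b hb
  -- distance facts for prefix
  have hwalkP : IsWalkFrom E (pathList v 0 i0) (v 0) (v i0) := by
    have h := pathList_isWalkFrom (E := E) v hedge 0 i0
    rw [Nat.zero_add] at h
    exact h
  obtain ⟨P, hPwalk, hPd⟩ := hdach (v 0) (v i0) ⟨_, hwalkP⟩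
  set pv := wWeight w P with hpv
  have hple : pv ≤ arcW w v 0 i0 := by
    have h1 := hdle (v 0) (v i0) _ hwalkP
    rw [hPd, pathList_wWeight] at h1
    exact_mod_cast h1
  -- distance facts for suffix
  have hwalkQ : IsWalkFrom E (pathList v (i0 + 1) (ℓ - (i0 + 1))) (v (i0 + 1)) (v 0) := by
    have h := pathList_isWalkFrom (E := E) v hedge (i0 + 1) (ℓ - (i0 + 1))
    rw [show i0 + 1 + (ℓ - (i0 + 1)) = ℓ from by omega, hper0] at h
    exact h
  obtain ⟨Q, hQwalk, hQd⟩ := hdach (v (i0 + 1)) (v 0) ⟨_, hwalkQ⟩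
  set qv := wWeight w Q with hqv
  have hqle : qv ≤ arcW w v (i0 + 1) (ℓ - (i0 + 1)) := by
    have h1 := hdle (v (i0 + 1)) (v 0) _ hwalkQ
    rw [hQd, pathList_wWeight] at h1
    exact_mod_cast h1
  have harcsplit : arcW w v 0 (i0 + 1) + arcW w v (i0 + 1) (ℓ - (i0 + 1)) = W := by
    have h := arcW_add (w := w) v 0 (i0 + 1) (ℓ - (i0 + 1))
    rw [show (i0 + 1) + (ℓ - (i0 + 1)) = ℓ from by omega, Nat.zero_add] at h
    exact h.symm
  have hA1 : arcW w v 0 (i0 + 1) = arcW w v 0 i0 + w (v i0) (v (i0 + 1)) := by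
    have h := arcW_succ (w := w) v 0 i0
    rw [Nat.zero_add] at h
    exact h
  -- lower bound from the closed walk
  obtain ⟨hRwalk, hRw⟩ := walk_append_edge (E := E) (w := w) P Q hPwalk hQwalk (hedge i0)
  have hlen2 : 2 ≤ (P ++ Q).length := by
    have h1 := one_le_length_of_head? hPwalk.2.1
    have h2 := one_le_length_of_head? hQwalk.2.1
    rw [List.length_append]
    omega
  have hlow : W ≤ pv + w (v i0) (v (i0 + 1)) + qv := by
    have h := closed_ge_list (E := E) hwC hmin (P ++ Q) (v 0) hRwalk hlen2
    rw [hRw] at h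
    exact h
  have heqsum : pv + w (v i0) (v (i0 + 1)) + qv = W :=
    le_antisymm (by linarith) hlow
  have hts1 : tstar ≤ max pv qv :=
    htstar.2 ⟨v 0, v i0, v (i0 + 1), pv, qv, hedge i0, hPd, hQd, heqsum, rfl⟩
  have hp2 : pv ≤ W / 2 := le_trans hple hi0le
  have hq2 : qv ≤ W / 2 := by
    by_cases hc : i0 + 1 < ℓ
    · have hnot : ¬ arcW w v 0 (i0 + 1) ≤ W / 2 := by
        intro hcon
        have hmem : i0 + 1 ∈ S :=
          Finset.mem_filter.mpr ⟨Finset.mem_range.mpr hc, hcon⟩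
        have := hmax' _ hmem
        omega
      push_neg at hnot
      omega
    · have hc2 : i0 + 1 = ℓ := by omega
      have h7 : arcW w v (i0 + 1) (ℓ - (i0 + 1)) = 0 := by
        rw [hc2]
        simp [arcW]
      omega
  exact ⟨le_trans hts1 (max_le hp2 hq2), part2⟩
end
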